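/- Conversely, if f : F_p^n → ℂ satisfies ‖f‖_∞ ≤ 1 and ‖f‖_{U^{d+1}} = 1, then f = e^{2πi P} for some non-classical polynomial P : F_p^n → ℝ/ℤ of degree ≤ d. -/

import Mathlib

open scoped BigOperators

noncomputable section

/-- The circle group `𝕋 = ℝ/ℤ`. -/
abbrev 𝕋 : Type := AddCircle (1 : ℝ)

/-- The character `e(x) = e^{2πix}` on `𝕋`, valued in `ℂ`. -/
def ee (x : 𝕋) : ℂ := (AddCircle.toCircle x : ℂ)

/-- The average `E_{x ∈ α}[f(x)]` of a complex-valued function on a finite type. -/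
def cavg {α : Type*} [Fintype α] (f : α → ℂ) : ℂ := (∑ x, f x) / (Fintype.card α : ℂ)

/-- The average of a real-valued function on a finite type. -/
def ravg {α : Type*} [Fintype α] (f : α → ℝ) : ℝ := (∑ x, f x) / (Fintype.card α : ℝ)

/-- Multiplicative derivative `Δ_h f (x) = f(x+h) conj (f x)`. -/
def mDeriv {G : Type*} [Add G] (h : G) (f : G → ℂ) : G → ℂ :=
  fun x => f (x + h) * (starRingEnd ℂ) (f x)

/-- `E_{h_1,…,h_d,x}[(Δ_{h_1} ⋯ Δ_{h_d} f)(x)]`. -/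
def gowersAvg {G : Type*} [AddCommGroup G] [Fintype G] : ℕ → (G → ℂ) → ℂ
  | 0, f => cavg f
  | d + 1, f => cavg fun h => gowersAvg d (mDeriv h f)

/-- The Gowers norm `‖f‖_{U^d} = |E_{h_1,…,h_d,x}[(Δ_{h_1} ⋯ Δ_{h_d} f)(x)]|^{1/2^d}`. -/
def gowersNorm {G : Type*} [AddCommGroup G] [Fintype G] (d : ℕ) (f : G → ℂ) : ℝ :=
  ‖gowersAvg d f‖ ^ ((1 : ℝ) / 2 ^ d)

/-- Additive derivative `D_h P (x) = P(x+h) - P(x)`. -/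
def aDeriv {G M : Type*} [Add G] [Sub M] (h : G) (P : G → M) : G → M :=
  fun x => P (x + h) - P x

/-- Iterated additive derivative `D_{h_1} ⋯ D_{h_k} P`. -/
def iterADeriv {G M : Type*} [AddCommGroup G] [AddCommGroup M] :
    {k : ℕ} → (Fin k → G) → (G → M) → (G → M)
  | 0, _, P => P
  | _ + 1, h, P => aDeriv (h 0) (iterADeriv (Fin.tail h) P)

/-- `P` is a (non-classical) polynomial of degree ≤ `d`:
all `(d+1)`-fold additive derivatives vanish identically. -/
def IsPolyDeg {G M : Type*} [AddCommGroup G] [AddCommGroup M] (d : ℕ) (P : G → M) : Prop :=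
  ∀ (h : Fin (d + 1) → G) (x : G), iterADeriv h P x = 0

/-- `P` has degree exactly `d`. -/
def ExactDeg {G M : Type*} [AddCommGroup G] [AddCommGroup M] (d : ℕ) (P : G → M) : Prop :=
  IsPolyDeg d P ∧ ∀ d' < d, ¬ IsPolyDeg d' P

/-- The degree of a polynomial: the least `d` with `IsPolyDeg d P`. -/
def polyDeg {G M : Type*} [AddCommGroup G] [AddCommGroup M] (P : G → M) : ℕ :=
  sInf {d | IsPolyDeg d P}

/-- `P` has `d`-rank at most `r`: `P = Γ(Q_1,…,Q_r)` with the `Q_i` of degree ≤ `d-1`. -/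
def HasRankLE {G : Type*} [AddCommGroup G] (d : ℕ) (P : G → 𝕋) (r : ℕ) : Prop :=
  ∃ (Q : Fin r → G → 𝕋) (Γ : (Fin r → 𝕋) → 𝕋),
    (∀ i, IsPolyDeg (d - 1) (Q i)) ∧ ∀ x, P x = Γ fun i => Q i x

/-- The `d`-rank of `P`, in `ℕ∞` (`⊤` if no finite decomposition exists;
for `d = 1` this is `⊤` exactly when `P` is non-constant). -/
def rankd {G : Type*} [AddCommGroup G] (d : ℕ) (P : G → 𝕋) : ℕ∞ :=
  sInf {r : ℕ∞ | ∃ m : ℕ, r = m ∧ HasRankLE d P m}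

/-- `P` has depth exactly `k` (shift zero): values in `U_{k+1} = (1/p^{k+1})ℤ/ℤ` but not all
in `U_k`. -/
def ExactDepth {G : Type*} (p k : ℕ) (P : G → 𝕋) : Prop :=
  (∀ x, (p ^ (k + 1)) • P x = 0) ∧ ¬ (∀ x, (p ^ k) • P x = 0)

/-- Application of a linear form `L = (w_t)_t` to a tuple of points of `F_p^n`:
`(x_t)_t ↦ ∑_t w_t x_t`. -/
def formApply {p : ℕ} {ι : Type*} [Fintype ι] {n : ℕ} (L : ι → ZMod p)
    (x : ι → Fin n → ZMod p) : Fin n → ZMod p := ∑ t, L t • x t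

/-- The `(d,k)`-dependency set of a system of forms `L`: the tuples
`(λ_j) ∈ [0, p^{k+1}-1]^m` with `∑_j λ_j P(L_j(x)) ≡ 0` for every non-classical polynomial `P`
of degree `d` and depth `k` (over every `F_p^n`). -/
def DepSet (p k d : ℕ) {ι μ : Type*} [Fintype ι] [Fintype μ]
    (L : μ → ι → ZMod p) : Set (μ → ℕ) :=
  {lam | (∀ j, lam j < p ^ (k + 1)) ∧
    ∀ (n : ℕ) (P : (Fin n → ZMod p) → 𝕋), ExactDeg d P → ExactDepth p k P →
      ∀ x : ι → Fin n → ZMod p, (∑ j, lam j • P (formApply (L j) x)) = 0}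

/-- `b_1,…,b_m ∈ 𝕋^κ` are consistent with the forms `L` with respect to degree data `dd`
and depth data `kk`. -/
def ConsistentWith (p : ℕ) {ι κ : Type*} [Fintype ι] [Fintype κ] {m : ℕ}
    (L : Fin m → ι → ZMod p) (dd kk : κ → ℕ) (b : Fin m → κ → 𝕋) : Prop :=
  ∀ i : κ, (∀ j, (p ^ (kk i + 1)) • b j i = 0) ∧
    ∀ lam ∈ DepSet p (kk i) (dd i) L, (∑ j, lam j • b j i) = 0

/-- The polynomial factor defined by `P_1,…,P_C` with depths `k_1,…,k_C` has rank greater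
than `r`: every integer combination `∑ λ_i P_i`, with the `λ_i` not all divisible by the
respective `p^{k_i+1}`, has `D`-rank > `r` where `D = max_i deg(λ_i P_i)`. -/
def FactorRankGT (p : ℕ) {G : Type*} [AddCommGroup G] {C : ℕ}
    (P : Fin C → G → 𝕋) (k : Fin C → ℕ) (r : ℕ) : Prop :=
  ∀ lam : Fin C → ℤ, (∃ i, ¬ ((p : ℤ) ^ (k i + 1) ∣ lam i)) →
    (r : ℕ∞) < rankd (Finset.univ.sup fun i => polyDeg fun x => lam i • P i x)
      (fun x => ∑ i, lam i • P i x)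

/-- Cauchy–Schwarz complexity ≤ `d`: for each `i`, the remaining forms can be partitioned into
`d+1` classes, with `L_i` outside the linear span of each class. -/
def CSComplexityLE (p : ℕ) {m : ℕ} {ι : Type*} [Fintype ι] (d : ℕ)
    (L : Fin m → ι → ZMod p) : Prop :=
  ∀ i, ∃ c : Fin m → Fin (d + 1), ∀ t,
    L i ∉ Submodule.span (ZMod p) {v | ∃ j, j ≠ i ∧ c j = t ∧ v = L j}



section AuxGN

/-- Iterated multiplicative derivative, peeling the first shift first. -/
def iterM {G : Type*} [Add G] : {k : ℕ} → (Fin k → G) → (G → ℂ) → (G → ℂ)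
  | 0, _, f => f
  | _ + 1, h, f => iterM (Fin.tail h) (mDeriv (h 0) f)

lemma abs_mDeriv_le {G : Type*} [Add G] {f : G → ℂ} (hf : ∀ x, ‖f x‖ ≤ 1)
    (h : G) : ∀ x, ‖mDeriv h f x‖ ≤ 1 := by
  intro x
  rw [mDeriv, norm_mul]
  calc ‖f (x + h)‖ * ‖(starRingEnd ℂ) (f x)‖
      ≤ 1 * 1 :=
        mul_le_mul (hf _) (by simpa using hf x) (norm_nonneg _) zero_le_one
    _ = 1 := by ring

lemma abs_cavg_le {α : Type*} [Fintype α] {f : α → ℂ} (hf : ∀ x, ‖f x‖ ≤ 1) :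
    ‖cavg f‖ ≤ 1 := by
  rw [cavg, norm_div, Complex.norm_natCast]
  rcases Nat.eq_zero_or_pos (Fintype.card α) with h | h
  · simp [h]
  · rw [div_le_one (by exact_mod_cast h)]
    calc ‖∑ x, f x‖ ≤ ∑ x : α, ‖f x‖ := norm_sum_le _ _
      _ ≤ ∑ _x : α, (1:ℝ) := Finset.sum_le_sum fun i _ => hf i
      _ = Fintype.card α := by simp

lemma abs_gowersAvg_le {G : Type*} [AddCommGroup G] [Fintype G] :
    ∀ (k : ℕ) (f : G → ℂ), (∀ x, ‖f x‖ ≤ 1) →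
    ‖gowersAvg k f‖ ≤ 1
  | 0, f, hf => abs_cavg_le hf
  | k + 1, f, hf => by
    rw [gowersAvg]
    exact abs_cavg_le fun h => abs_gowersAvg_le k _ (abs_mDeriv_le hf h)

lemma cavg_eq_of_abs_eq_one {α : Type*} [Fintype α] {f : α → ℂ}
    (hf : ∀ x, ‖f x‖ ≤ 1) (h1 : ‖cavg f‖ = 1) :
    ∀ x, f x = cavg f := by
  set c := cavg f with hc
  have hcard : (Fintype.card α : ℂ) ≠ 0 := by
    intro h
    rw [hc, cavg, h, div_zero] at h1
    simp at h1
  have hsum : ∑ x, f x = (Fintype.card α : ℂ) * c := by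
    rw [hc, cavg, mul_div_cancel₀ _ hcard]
  have hre : ∀ x, 1 - ((starRingEnd ℂ) c * f x).re ≥ 0 := by
    intro x
    have : ((starRingEnd ℂ) c * f x).re ≤ ‖(starRingEnd ℂ) c * f x‖ :=
      Complex.re_le_norm _
    rw [norm_mul, Complex.norm_conj, h1, one_mul] at this
    linarith [hf x]
  have hnsq : Complex.normSq c = 1 := by rw [← Complex.sq_norm, h1, one_pow]
  have hcc : (starRingEnd ℂ) c * c = 1 := by
    rw [mul_comm, Complex.mul_conj, hnsq, Complex.ofReal_one]
  have hsum0 : ∑ x, (1 - ((starRingEnd ℂ) c * f x).re) = 0 := by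
    have key : ∑ x, ((starRingEnd ℂ) c * f x).re = (Fintype.card α : ℝ) := by
      rw [← Complex.re_sum, ← Finset.mul_sum, hsum, ← mul_assoc,
        mul_comm ((starRingEnd ℂ) c) ((Fintype.card α : ℂ)), mul_assoc, hcc, mul_one]
      simp
    rw [Finset.sum_sub_distrib, key]
    simp
  have hzero : ∀ x, 1 - ((starRingEnd ℂ) c * f x).re = 0 := by
    intro x
    have := (Finset.sum_eq_zero_iff_of_nonneg (fun i _ => hre i)).mp hsum0 x (Finset.mem_univ x)
    linarith [this]
  intro x
  have hre1 : ((starRingEnd ℂ) c * f x).re = 1 := by linarith [hzero x]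
  have habs : ‖(starRingEnd ℂ) c * f x‖ ≤ 1 := by
    rw [norm_mul, Complex.norm_conj, h1, one_mul]; exact hf x
  have him : ((starRingEnd ℂ) c * f x).im = 0 := by
    have h2 : Complex.normSq ((starRingEnd ℂ) c * f x) ≤ 1 := by
      rw [← Complex.sq_norm]
      nlinarith [norm_nonneg ((starRingEnd ℂ) c * f x)]
    rw [Complex.normSq_apply, hre1] at h2
    nlinarith
  have heq : (starRingEnd ℂ) c * f x = 1 := by
    apply Complex.ext <;> simp [hre1, him]
  have h3 : c * ((starRingEnd ℂ) c * f x) = c * 1 := by rw [heq]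
  rw [← mul_assoc, Complex.mul_conj, mul_one] at h3
  rw [hnsq] at h3
  simpa using h3

lemma iterM_eq_gowersAvg {G : Type*} [AddCommGroup G] [Fintype G] :
    ∀ (k : ℕ) (f : G → ℂ), (∀ x, ‖f x‖ ≤ 1) →
    ‖gowersAvg k f‖ = 1 → ∀ (h : Fin k → G) (x : G), iterM h f x = gowersAvg k f
  | 0, f, hf, h1, h, x => cavg_eq_of_abs_eq_one hf h1 x
  | k + 1, f, hf, h1, h, x => by
    rw [gowersAvg] at h1 ⊢
    have hble : ∀ g : G, ‖gowersAvg k (mDeriv g f)‖ ≤ 1 :=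
      fun g => abs_gowersAvg_le k _ (abs_mDeriv_le hf g)
    have heq := cavg_eq_of_abs_eq_one hble h1
    have h2 : ‖gowersAvg k (mDeriv (h 0) f)‖ = 1 := by
      rw [heq (h 0)]; exact h1
    rw [iterM]
    rw [iterM_eq_gowersAvg k (mDeriv (h 0) f) (abs_mDeriv_le hf (h 0)) h2 (Fin.tail h) x]
    exact heq (h 0)

lemma iterM_zero_real {G : Type*} [AddCommGroup G] :
    ∀ (k : ℕ) (g : G → ℂ), (∀ y, (starRingEnd ℂ) (g y) = g y) →
    ∀ x, iterM (fun _ : Fin k => (0:G)) g x = (g x) ^ (2 ^ k)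
  | 0, g, hg, x => by rw [iterM]; simp
  | k + 1, g, hg, x => by
    rw [iterM]
    have ht : Fin.tail (fun _ : Fin (k+1) => (0:G)) = fun _ : Fin k => (0:G) := rfl
    rw [ht]
    have hm : ∀ y, (starRingEnd ℂ) (mDeriv 0 g y) = mDeriv 0 g y := by
      intro y; simp [mDeriv, map_mul, hg]
    rw [iterM_zero_real k (mDeriv 0 g) hm x]
    rw [mDeriv, add_zero, hg, ← sq, ← pow_mul, ← pow_succ']

lemma ee_add (a b : 𝕋) : ee (a + b) = ee a * ee b := by
  rw [ee, ee, ee, AddCircle.toCircle_add, Circle.coe_mul]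

lemma ee_zero : ee (0 : 𝕋) = 1 := by
  rw [ee, AddCircle.toCircle_zero, Circle.coe_one]

lemma ee_conj (a : 𝕋) : (starRingEnd ℂ) (ee a) = ee (-a) := by
  have hneg : AddCircle.toCircle (-a) = (AddCircle.toCircle a)⁻¹ := by
    apply eq_inv_of_mul_eq_one_left
    rw [← AddCircle.toCircle_add, neg_add_cancel, AddCircle.toCircle_zero]
  rw [ee, ee, hneg, Circle.coe_inv_eq_conj]

lemma ee_inj {a b : 𝕋} (h : ee a = ee b) : a = b :=
  AddCircle.injective_toCircle one_ne_zero (Circle.coe_injective h)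

lemma mDeriv_ee {G : Type*} [AddCommGroup G] (h : G) (Q : G → 𝕋) :
    mDeriv h (fun y => ee (Q y)) = fun x => ee (aDeriv h Q x) := by
  funext x
  rw [mDeriv, aDeriv, sub_eq_add_neg, ee_add, ← ee_conj]

lemma aDeriv_aDeriv {G M : Type*} [AddCommGroup G] [AddCommGroup M] (a b : G) (Q : G → M) :
    aDeriv a (aDeriv b Q) = aDeriv b (aDeriv a Q) := by
  funext x
  simp only [aDeriv]
  rw [add_right_comm x b a]
  abel

lemma iterADeriv_aDeriv {G M : Type*} [AddCommGroup G] [AddCommGroup M] :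
    ∀ {k : ℕ} (h : Fin k → G) (g : G) (Q : G → M),
    iterADeriv h (aDeriv g Q) = aDeriv g (iterADeriv h Q)
  | 0, h, g, Q => rfl
  | k + 1, h, g, Q => by
    rw [iterADeriv, iterADeriv, iterADeriv_aDeriv (Fin.tail h) g Q, aDeriv_aDeriv]

lemma iterM_ee {G : Type*} [AddCommGroup G] :
    ∀ (k : ℕ) (h : Fin k → G) (Q : G → 𝕋) (x : G),
    iterM h (fun y => ee (Q y)) x = ee (iterADeriv h Q x)
  | 0, h, Q, x => rfl
  | k + 1, h, Q, x => by
    rw [iterM, mDeriv_ee, iterM_ee k (Fin.tail h) (aDeriv (h 0) Q) x, iterADeriv,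
      ← iterADeriv_aDeriv]

end AuxGN

/-- If `f : F_p^n → ℂ` satisfies `‖f‖_∞ ≤ 1` and `‖f‖_{U^{d+1}} = 1`, then
`f = e^{2πiP}` for some non-classical polynomial `P` of degree ≤ d. -/
theorem poly_of_gowersNorm_eq_one (p : ℕ) [Fact p.Prime] (n d : ℕ)
    (f : (Fin n → ZMod p) → ℂ) (hf : ∀ x, ‖f x‖ ≤ 1)
    (hU : gowersNorm (d + 1) f = 1) :
    ∃ P : (Fin n → ZMod p) → 𝕋, IsPolyDeg d P ∧ ∀ x, f x = ee (P x) := by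
  classical
  set a := ‖gowersAvg (d + 1) f‖ with ha
  have h0 : (0:ℝ) ≤ a := norm_nonneg _
  have habs : a = 1 := by
    rw [gowersNorm] at hU
    have hne : ((2:ℝ) ^ (d+1)) ≠ 0 := by positivity
    have h2 : a ^ ((1:ℝ) / 2 ^ (d+1) * (2:ℝ) ^ (d+1)) =
        (a ^ ((1:ℝ) / 2 ^ (d+1))) ^ ((2:ℝ) ^ (d+1)) := Real.rpow_mul h0 _ _
    rw [one_div_mul_cancel hne, Real.rpow_one, hU, Real.one_rpow] at h2
    exact h2
  have hall := iterM_eq_gowersAvg (d + 1) f hf habs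
  have hmd0 : ∀ y, (starRingEnd ℂ) (mDeriv 0 f y) = mDeriv 0 f y := by
    intro y; simp [mDeriv, map_mul, mul_comm]
  have hiter0 : ∀ x, iterM (fun _ : Fin (d+1) => (0 : Fin n → ZMod p)) f x
      = ((Complex.normSq (f x) : ℂ)) ^ (2 ^ d) := by
    intro x
    rw [iterM]
    rw [show Fin.tail (fun _ : Fin (d+1) => (0 : Fin n → ZMod p))
      = fun _ : Fin d => (0 : Fin n → ZMod p) from rfl]
    rw [iterM_zero_real d (mDeriv 0 f) hmd0 x]
    congr 1
    rw [mDeriv, add_zero, Complex.mul_conj]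
  have hkey : ∀ x, ((Complex.normSq (f x) : ℂ)) ^ (2 ^ d) = gowersAvg (d + 1) f := by
    intro x
    rw [← hiter0 x]
    exact hall (fun _ => 0) x
  have hnsq : ∀ x, Complex.normSq (f x) = 1 := by
    intro x
    have h1 : ‖((Complex.normSq (f x) : ℂ)) ^ (2 ^ d)‖ = 1 := by
      rw [hkey x]; exact habs
    rw [norm_pow, Complex.norm_real, Real.norm_eq_abs, abs_of_nonneg (Complex.normSq_nonneg _)] at h1
    set r := Complex.normSq (f x) with hr
    have hr0 : 0 ≤ r := Complex.normSq_nonneg _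
    have hne : (2:ℕ) ^ d ≠ 0 := by positivity
    rcases lt_trichotomy r 1 with h | h | h
    · exfalso
      have := pow_lt_one₀ hr0 h hne
      rw [h1] at this
      exact lt_irrefl 1 this
    · exact h
    · exfalso
      have := one_lt_pow₀ h hne
      rw [h1] at this
      exact lt_irrefl 1 this
  have hc1 : gowersAvg (d + 1) f = 1 := by
    rw [← hkey 0, hnsq, Complex.ofReal_one, one_pow]
  have hmem : ∀ x, f x ∈ Metric.sphere (0:ℂ) 1 := by
    intro x
    rw [mem_sphere_zero_iff_norm]
    have := Complex.sq_norm (f x)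
    nlinarith [norm_nonneg (f x), hnsq x]
  set P : (Fin n → ZMod p) → 𝕋 :=
    fun x => (AddCircle.homeomorphCircle (one_ne_zero : (1:ℝ) ≠ 0)).symm ⟨f x, hmem x⟩
    with hP
  have hfP : ∀ x, f x = ee (P x) := by
    intro x
    have h1 : AddCircle.toCircle (P x) = (⟨f x, hmem x⟩ : Circle) := by
      rw [← AddCircle.homeomorphCircle_apply (one_ne_zero : (1:ℝ) ≠ 0), hP]
      exact (AddCircle.homeomorphCircle one_ne_zero).apply_symm_apply _
    rw [ee, h1]
  refine ⟨P, ?_, hfP⟩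
  intro h x
  have h1 := hall h x
  rw [hc1, show f = fun y => ee (P y) from funext hfP, iterM_ee] at h1
  exact ee_inj (h1.trans ee_zero.symm)

end
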